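/- arXiv:2105.11815 — 5 statements merged into one kernel-verified Lean document; each statement's English description precedes it below -/
import Mathlib

section
/- Let A ∈ ℝ^{n×d} and y = Ax for some x ∈ ℝ^d. Then the non-uniformity of y satisfies ν(y) ≤ μ(A), i.e., ‖y‖_∞ / ‖y‖₂ ≤ μ(A) (for y ≠ 0). -/
open Matrix BigOperators

theorem stmt_4 {n d r : ℕ} (A : Matrix (Fin n) (Fin d) ℝ)
    (U : Matrix (Fin n) (Fin r) ℝ) (σ : Fin r → ℝ) (V : Matrix (Fin d) (Fin r) ℝ)
    (hU : Uᵀ * U = 1) (hV : Vᵀ * V = 1) (hσ : ∀ i, 0 < σ i)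
    (hA : A = U * Matrix.diagonal σ * Vᵀ)
    (μ : ℝ)
    (hμ : IsGreatest {x : ℝ | ∃ i : Fin n, x = Real.sqrt (∑ j, (U i j) ^ 2)} μ)
    (x : Fin d → ℝ) (y : Fin n → ℝ) (hy : y = A.mulVec x) (hy0 : y ≠ 0) :
    (⨆ i : Fin n, |y i|) / Real.sqrt (∑ i, (y i) ^ 2) ≤ μ := by
  have hn : Nonempty (Fin n) := by
    rcases Nat.eq_zero_or_pos n with h | h
    · exfalso; apply hy0; subst h; funext i; exact i.elim0
    · exact ⟨⟨0, h⟩⟩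
  set z : Fin r → ℝ := (Matrix.diagonal σ * Vᵀ).mulVec x with hz
  have hyz : y = U.mulVec z := by
    rw [hy, hA, Matrix.mul_assoc, ← Matrix.mulVec_mulVec]
  have hsum : ∑ i, (y i) ^ 2 = ∑ j, (z j) ^ 2 := by
    have h1 : ∑ i, (y i) ^ 2 = y ⬝ᵥ y := by simp [dotProduct, sq]
    have h2 : ∑ j, (z j) ^ 2 = z ⬝ᵥ z := by simp [dotProduct, sq]
    rw [h1, h2, hyz, Matrix.dotProduct_mulVec, ← Matrix.mulVec_transpose,
      Matrix.mulVec_mulVec, hU, Matrix.one_mulVec]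
  have hzpos : 0 < Real.sqrt (∑ i, (y i) ^ 2) := by
    apply Real.sqrt_pos.2
    apply Finset.sum_pos' (fun i _ => sq_nonneg (y i))
    by_contra hc
    push_neg at hc
    apply hy0
    funext i
    have h2 := hc i (Finset.mem_univ i)
    have h3 : (y i) ^ 2 = 0 := le_antisymm h2 (sq_nonneg _)
    exact pow_eq_zero_iff (two_ne_zero) |>.1 h3
  rw [div_le_iff₀ hzpos]
  apply ciSup_le
  intro i
  have hμi : Real.sqrt (∑ j, (U i j) ^ 2) ≤ μ := hμ.2 ⟨i, rfl⟩
  have hyi : y i = ∑ j, U i j * z j := by rw [hyz]; rfl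
  have hcs : (y i) ^ 2 ≤ (∑ j, (U i j) ^ 2) * (∑ j, (z j) ^ 2) := by
    rw [hyi]; exact Finset.sum_mul_sq_le_sq_mul_sq _ _ _
  calc |y i| = Real.sqrt ((y i) ^ 2) := (Real.sqrt_sq_eq_abs _).symm
    _ ≤ Real.sqrt ((∑ j, (U i j) ^ 2) * (∑ j, (z j) ^ 2)) := Real.sqrt_le_sqrt hcs
    _ = Real.sqrt (∑ j, (U i j) ^ 2) * Real.sqrt (∑ j, (z j) ^ 2) :=
        Real.sqrt_mul (Finset.sum_nonneg fun j _ => sq_nonneg _) _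
    _ ≤ μ * Real.sqrt (∑ i, (y i) ^ 2) := by
        rw [hsum]
        exact mul_le_mul_of_nonneg_right hμi (Real.sqrt_nonneg _)
end

section
/- Let ε, γ ∈ (0,1), U ∈ ℝ^{n×r} with orthonormal columns, M = {Uz : ‖z‖₂ = 1}, and N a γ-cover of M. If S ∈ ℝ^{m×n} is a generalised ε₁-JL embedding for N with ε₁ = ε(1−γ)(1−γ²)/(1+2γ−γ²), then S is an ε-JL embedding for M. -/
open Matrix BigOperators

set_option maxHeartbeats 1000000

private lemma sumsq_dot {k : ℕ} (a : Fin k → ℝ) : ∑ i, a i ^ 2 = a ⬝ᵥ a := by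
  simp [dotProduct, sq]

private lemma dot_self_nonneg' {k : ℕ} (a : Fin k → ℝ) : 0 ≤ a ⬝ᵥ a :=
  Finset.sum_nonneg fun i _ => mul_self_nonneg _

private lemma dot_self_pos {k : ℕ} (d : Fin k → ℝ) (h : d ≠ 0) : 0 < d ⬝ᵥ d := by
  rcases (dot_self_nonneg' d).lt_or_eq with h'|h'
  · exact h'
  · exact absurd ((dotProduct_self_eq_zero (v := d)).mp h'.symm) h

private lemma cauchy_dot {k : ℕ} (a b : Fin k → ℝ) :
    (a ⬝ᵥ b)^2 ≤ (a ⬝ᵥ a) * (b ⬝ᵥ b) := by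
  simpa [dotProduct, sq] using Finset.sum_mul_sq_le_sq_mul_sq Finset.univ a b

private lemma expand_dot {k : ℕ} (a b : Fin k → ℝ) (t : ℝ) :
    (a + t • b) ⬝ᵥ (a + t • b) = a ⬝ᵥ a + 2*t*(a ⬝ᵥ b) + t^2 * (b ⬝ᵥ b) := by
  rw [dotProduct_add, add_dotProduct, add_dotProduct, dotProduct_smul, smul_dotProduct,
    smul_dotProduct, dotProduct_smul, dotProduct_comm b a, smul_eq_mul, smul_eq_mul, smul_eq_mul]
  ring

theorem stmt_10 {m n r : ℕ} (ε γ : ℝ) (hε0 : 0 < ε) (hε1 : ε < 1)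
    (hγ0 : 0 < γ) (hγ1 : γ < 1)
    (U : Matrix (Fin n) (Fin r) ℝ) (hU : Uᵀ * U = 1)
    (M : Set (Fin n → ℝ))
    (hM : M = {y | ∃ z : Fin r → ℝ, ∑ i, (z i) ^ 2 = 1 ∧ y = U.mulVec z})
    (N : Set (Fin n → ℝ)) (hNM : N ⊆ M)
    (hcover : ∀ y ∈ M, ∃ w ∈ N, Real.sqrt (∑ i, (y i - w i) ^ 2) ≤ γ)
    (S : Matrix (Fin m) (Fin n) ℝ)
    (hgen : ∀ y₁ ∈ N, ∀ y₂ ∈ N,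
      |(∑ i, S.mulVec y₁ i * S.mulVec y₂ i) - ∑ i, y₁ i * y₂ i| ≤
        (ε * (1 - γ) * (1 - γ ^ 2) / (1 + 2 * γ - γ ^ 2)) *
          Real.sqrt (∑ i, (y₁ i) ^ 2) * Real.sqrt (∑ i, (y₂ i) ^ 2)) :
    ∀ y ∈ M,
      (1 - ε) * ∑ i, (y i) ^ 2 ≤ ∑ i, (S.mulVec y i) ^ 2 ∧
      ∑ i, (S.mulVec y i) ^ 2 ≤ (1 + ε) * ∑ i, (y i) ^ 2 := by
  have hγ1' : 0 < 1 - γ := by linarith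
  have hγsq : 0 < 1 - γ^2 := by nlinarith
  have hden : 0 < 1 + 2*γ - γ^2 := by nlinarith
  set ε₁ : ℝ := ε * (1 - γ) * (1 - γ ^ 2) / (1 + 2 * γ - γ ^ 2) with hε₁def
  have hε₁pos : 0 < ε₁ := by
    apply div_pos _ hden
    positivity
  -- U preserves dot products of images
  have hiso : ∀ z : Fin r → ℝ, (U.mulVec z) ⬝ᵥ (U.mulVec z) = z ⬝ᵥ z := by
    intro z
    rw [dotProduct_mulVec, ← mulVec_transpose, mulVec_mulVec, hU, one_mulVec]
  have hMone : ∀ v ∈ M, v ⬝ᵥ v = 1 := by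
    intro v hv
    rw [hM] at hv
    obtain ⟨z, hz, rfl⟩ := hv
    rw [hiso, ← sumsq_dot, hz]
  have hMU : ∀ v ∈ M, ∃ z : Fin r → ℝ, v = U.mulVec z := by
    intro v hv
    rw [hM] at hv
    obtain ⟨z, _, rfl⟩ := hv
    exact ⟨z, rfl⟩
  -- restated generalized JL
  have hgen' : ∀ w₁ ∈ N, ∀ w₂ ∈ N,
      |S.mulVec w₁ ⬝ᵥ S.mulVec w₂ - w₁ ⬝ᵥ w₂| ≤ ε₁ := by
    intro w₁ h1 w₂ h2
    have := hgen w₁ h1 w₂ h2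
    rw [sumsq_dot, sumsq_dot, hMone _ (hNM h1), hMone _ (hNM h2), Real.sqrt_one] at this
    have e1 : (∑ i, S.mulVec w₁ i * S.mulVec w₂ i) = S.mulVec w₁ ⬝ᵥ S.mulVec w₂ := rfl
    have e2 : (∑ i, w₁ i * w₂ i) = w₁ ⬝ᵥ w₂ := rfl
    rw [e1, e2] at this
    linarith [this]
  -- decomposition of any point of M as near cover point plus small multiple of M point
  have hdecomp : ∀ v ∈ M, ∃ w ∈ N, ∃ t : ℝ, ∃ u ∈ M,
      0 ≤ t ∧ t ≤ γ ∧ v = w + t • u := by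
    intro v hv
    obtain ⟨w, hwN, hwd⟩ := hcover v hv
    set d : Fin n → ℝ := v - w with hd
    have hdd : ∑ i, (v i - w i)^2 = d ⬝ᵥ d := by
      rw [← sumsq_dot]
      simp [hd]
    rw [hdd] at hwd
    by_cases h0 : d = 0
    · refine ⟨w, hwN, 0, v, hv, le_refl _, le_of_lt hγ0, ?_⟩
      have : v = w := by
        have := sub_eq_zero.mp h0
        exact this
      simp [this]
    · set t : ℝ := Real.sqrt (d ⬝ᵥ d) with ht
      have hddpos : 0 < d ⬝ᵥ d := dot_self_pos d h0
      have htpos : 0 < t := Real.sqrt_pos.mpr hddpos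
      have ht2 : t^2 = d ⬝ᵥ d := Real.sq_sqrt (le_of_lt hddpos)
      refine ⟨w, hwN, t, t⁻¹ • d, ?_, le_of_lt htpos, hwd, ?_⟩
      · -- t⁻¹ • d ∈ M
        obtain ⟨z₁, hz₁⟩ := hMU v hv
        obtain ⟨z₂, hz₂⟩ := hMU w (hNM hwN)
        have hdz : d = U.mulVec (z₁ - z₂) := by
          rw [hd, hz₁, hz₂, mulVec_sub]
        rw [hM]
        refine ⟨t⁻¹ • (z₁ - z₂), ?_, ?_⟩
        · rw [sumsq_dot, smul_dotProduct, dotProduct_smul, smul_eq_mul, smul_eq_mul]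
          have : (z₁ - z₂) ⬝ᵥ (z₁ - z₂) = d ⬝ᵥ d := by rw [hdz, hiso]
          rw [this, ← ht2, sq]
          field_simp
        · rw [hdz, mulVec_smul]
      · -- v = w + t • (t⁻¹ • d)
        rw [smul_smul, mul_inv_cancel₀ (ne_of_gt htpos), one_smul, hd]
        abel
  -- now the main argument
  intro y hy
  -- Frobenius bound
  set F2 : ℝ := ∑ i, ∑ j, S i j ^ 2 with hF2
  have hF2nn : 0 ≤ F2 := Finset.sum_nonneg fun i _ => Finset.sum_nonneg fun j _ => sq_nonneg _
  have hSbound : ∀ v ∈ M, S.mulVec v ⬝ᵥ S.mulVec v ≤ F2 := by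
    intro v hv
    have hv1 := hMone v hv
    have : S.mulVec v ⬝ᵥ S.mulVec v = ∑ i, (∑ j, S i j * v j)^2 := by
      simp [dotProduct, mulVec, sq]
    rw [this]
    calc ∑ i, (∑ j, S i j * v j)^2
        ≤ ∑ i, (∑ j, S i j ^2) * (∑ j, v j ^2) :=
          Finset.sum_le_sum fun i _ => Finset.sum_mul_sq_le_sq_mul_sq Finset.univ _ _
      _ = F2 := by
          rw [sumsq_dot, hv1]
          simp [hF2]
  have hSdotbound : ∀ v₁ ∈ M, ∀ v₂ ∈ M,
      |S.mulVec v₁ ⬝ᵥ S.mulVec v₂ - v₁ ⬝ᵥ v₂| ≤ F2 + 1 := by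
    intro v₁ h1 v₂ h2
    have c1 : |S.mulVec v₁ ⬝ᵥ S.mulVec v₂| ≤ F2 := by
      have := cauchy_dot (S.mulVec v₁) (S.mulVec v₂)
      have hb : (S.mulVec v₁ ⬝ᵥ S.mulVec v₂)^2 ≤ F2 * F2 :=
        le_trans this (mul_le_mul (hSbound v₁ h1) (hSbound v₂ h2)
          (dot_self_nonneg' _) hF2nn)
      nlinarith [abs_nonneg (S.mulVec v₁ ⬝ᵥ S.mulVec v₂), sq_abs (S.mulVec v₁ ⬝ᵥ S.mulVec v₂)]
    have c2 : |v₁ ⬝ᵥ v₂| ≤ 1 := by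
      have := cauchy_dot v₁ v₂
      rw [hMone v₁ h1, hMone v₂ h2] at this
      nlinarith [abs_nonneg (v₁ ⬝ᵥ v₂), sq_abs (v₁ ⬝ᵥ v₂)]
    calc |S.mulVec v₁ ⬝ᵥ S.mulVec v₂ - v₁ ⬝ᵥ v₂|
        ≤ |S.mulVec v₁ ⬝ᵥ S.mulVec v₂| + |v₁ ⬝ᵥ v₂| := abs_sub _ _
      _ ≤ F2 + 1 := add_le_add c1 c2
  -- the sup sets
  set errf : (Fin n → ℝ) → ℝ :=
    fun v => |S.mulVec v ⬝ᵥ S.mulVec v - v ⬝ᵥ v| with herrf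
  set Aset : Set ℝ := errf '' M with hAset
  set Cset : Set ℝ :=
    {c : ℝ | ∃ w ∈ N, ∃ v ∈ M, c = |S.mulVec w ⬝ᵥ S.mulVec v - w ⬝ᵥ v|} with hCset
  have hAne : Aset.Nonempty := ⟨errf y, ⟨y, hy, rfl⟩⟩
  obtain ⟨w₀, hw₀N, _⟩ := hcover y hy
  have hCne : Cset.Nonempty :=
    ⟨|S.mulVec w₀ ⬝ᵥ S.mulVec y - w₀ ⬝ᵥ y|, w₀, hw₀N, y, hy, rfl⟩
  have hAbdd : BddAbove Aset := by
    refine ⟨F2 + 1, ?_⟩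
    rintro a ⟨v, hv, rfl⟩
    exact hSdotbound v hv v hv
  have hCbdd : BddAbove Cset := by
    refine ⟨F2 + 1, ?_⟩
    rintro c ⟨w, hw, v, hv, rfl⟩
    exact hSdotbound w (hNM hw) v hv
  set A : ℝ := sSup Aset with hA
  set C : ℝ := sSup Cset with hC
  have hAnn : 0 ≤ A := le_trans (abs_nonneg _) (le_csSup hAbdd ⟨y, hy, rfl⟩)
  have hCnn : 0 ≤ C := le_trans (abs_nonneg _) (le_csSup hCbdd ⟨w₀, hw₀N, y, hy, rfl⟩)
  -- cross bound : every element of Cset ≤ ε₁ + γ * C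
  have hCrec : C ≤ ε₁ + γ * C := by
    apply csSup_le hCne
    rintro c ⟨w, hwN, v, hvM, rfl⟩
    obtain ⟨w', hw'N, t, u, huM, ht0, htγ, rfl⟩ := hdecomp v hvM
    have expand : S.mulVec w ⬝ᵥ S.mulVec (w' + t • u) - w ⬝ᵥ (w' + t • u)
        = (S.mulVec w ⬝ᵥ S.mulVec w' - w ⬝ᵥ w')
          + t * (S.mulVec w ⬝ᵥ S.mulVec u - w ⬝ᵥ u) := by
      rw [mulVec_add, mulVec_smul, dotProduct_add, dotProduct_add,
        dotProduct_smul, dotProduct_smul, smul_eq_mul, smul_eq_mul]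
      ring
    rw [expand]
    have e1 : |S.mulVec w ⬝ᵥ S.mulVec w' - w ⬝ᵥ w'| ≤ ε₁ := hgen' w hwN w' hw'N
    have e2 : |S.mulVec w ⬝ᵥ S.mulVec u - w ⬝ᵥ u| ≤ C :=
      le_csSup hCbdd ⟨w, hwN, u, huM, rfl⟩
    calc |(S.mulVec w ⬝ᵥ S.mulVec w' - w ⬝ᵥ w')
          + t * (S.mulVec w ⬝ᵥ S.mulVec u - w ⬝ᵥ u)|
        ≤ |S.mulVec w ⬝ᵥ S.mulVec w' - w ⬝ᵥ w'|
          + |t * (S.mulVec w ⬝ᵥ S.mulVec u - w ⬝ᵥ u)| := abs_add_le _ _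
      _ ≤ ε₁ + γ * C := by
          refine add_le_add e1 ?_
          rw [abs_mul, abs_of_nonneg ht0]
          exact mul_le_mul htγ e2 (abs_nonneg _) (le_of_lt hγ0)
  have hCbound : C * (1 - γ) ≤ ε₁ := by nlinarith
  -- main recursion : every element of Aset ≤ ε₁ + 2γC + γ²A
  have hArec : A ≤ ε₁ + 2*γ*C + γ^2*A := by
    apply csSup_le hAne
    rintro a ⟨v, hvM, rfl⟩
    obtain ⟨w, hwN, t, u, huM, ht0, htγ, rfl⟩ := hdecomp v hvM
    have expand1 : S.mulVec (w + t • u) ⬝ᵥ S.mulVec (w + t • u)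
        = S.mulVec w ⬝ᵥ S.mulVec w + 2*t*(S.mulVec w ⬝ᵥ S.mulVec u)
          + t^2 * (S.mulVec u ⬝ᵥ S.mulVec u) := by
      rw [mulVec_add, mulVec_smul]
      exact expand_dot _ _ _
    have expand2 : (w + t • u) ⬝ᵥ (w + t • u)
        = w ⬝ᵥ w + 2*t*(w ⬝ᵥ u) + t^2 * (u ⬝ᵥ u) := expand_dot _ _ _
    have key : S.mulVec (w + t • u) ⬝ᵥ S.mulVec (w + t • u) - (w + t • u) ⬝ᵥ (w + t • u)
        = (S.mulVec w ⬝ᵥ S.mulVec w - w ⬝ᵥ w)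
          + 2*t*(S.mulVec w ⬝ᵥ S.mulVec u - w ⬝ᵥ u)
          + t^2*(S.mulVec u ⬝ᵥ S.mulVec u - u ⬝ᵥ u) := by
      rw [expand1, expand2]; ring
    have e1 : |S.mulVec w ⬝ᵥ S.mulVec w - w ⬝ᵥ w| ≤ ε₁ := hgen' w hwN w hwN
    have e2 : |S.mulVec w ⬝ᵥ S.mulVec u - w ⬝ᵥ u| ≤ C :=
      le_csSup hCbdd ⟨w, hwN, u, huM, rfl⟩
    have e3 : |S.mulVec u ⬝ᵥ S.mulVec u - u ⬝ᵥ u| ≤ A :=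
      le_csSup hAbdd ⟨u, huM, rfl⟩
    simp only [herrf]
    rw [key]
    calc |(S.mulVec w ⬝ᵥ S.mulVec w - w ⬝ᵥ w)
          + 2*t*(S.mulVec w ⬝ᵥ S.mulVec u - w ⬝ᵥ u)
          + t^2*(S.mulVec u ⬝ᵥ S.mulVec u - u ⬝ᵥ u)|
        ≤ |(S.mulVec w ⬝ᵥ S.mulVec w - w ⬝ᵥ w)
          + 2*t*(S.mulVec w ⬝ᵥ S.mulVec u - w ⬝ᵥ u)|
          + |t^2*(S.mulVec u ⬝ᵥ S.mulVec u - u ⬝ᵥ u)| := abs_add_le _ _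
      _ ≤ (|S.mulVec w ⬝ᵥ S.mulVec w - w ⬝ᵥ w|
          + |2*t*(S.mulVec w ⬝ᵥ S.mulVec u - w ⬝ᵥ u)|)
          + |t^2*(S.mulVec u ⬝ᵥ S.mulVec u - u ⬝ᵥ u)| :=
          add_le_add_left (abs_add_le _ _) _
      _ ≤ ε₁ + 2*γ*C + γ^2*A := by
          refine add_le_add (add_le_add e1 ?_) ?_
          · rw [abs_mul, abs_of_nonneg (by linarith : (0:ℝ) ≤ 2*t)]
            have : 2*t ≤ 2*γ := by linarith
            exact mul_le_mul this e2 (abs_nonneg _) (by linarith)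
          · rw [abs_mul, abs_of_nonneg (sq_nonneg t)]
            have ht2 : t^2 ≤ γ^2 := by nlinarith
            exact mul_le_mul ht2 e3 (abs_nonneg _) (sq_nonneg γ)
  -- conclude A ≤ ε
  have hε₁eq : ε₁ * (1 + 2*γ - γ^2) = ε * (1 - γ) * (1 - γ^2) := by
    rw [hε₁def]
    rw [div_mul_cancel₀ _ hden.ne']
  have hAε : A ≤ ε := by
    have s1 : A * (1 - γ^2) ≤ ε₁ + 2*γ*C := by linarith
    have s1' := mul_le_mul_of_nonneg_right s1 (le_of_lt hγ1')
    have s2 : 2*γ*C*(1-γ) ≤ 2*γ*ε₁ := by nlinarith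
    have s3 : A * (1-γ^2) * (1-γ) ≤ ε₁*(1+γ) := by nlinarith
    have s4 : ε₁*(1+γ) ≤ ε₁*(1+2*γ-γ^2) := by
      nlinarith [mul_nonneg (le_of_lt hε₁pos) (mul_nonneg (le_of_lt hγ0) (le_of_lt hγ1'))]
    have s5 : A * ((1-γ^2)*(1-γ)) ≤ ε * ((1-γ^2)*(1-γ)) := by nlinarith
    exact le_of_mul_le_mul_right s5 (mul_pos hγsq hγ1')
  -- finish
  have hy1 : y ⬝ᵥ y = 1 := hMone y hy
  have herr : |S.mulVec y ⬝ᵥ S.mulVec y - y ⬝ᵥ y| ≤ ε :=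
    le_trans (le_csSup hAbdd ⟨y, hy, rfl⟩) hAε
  rw [hy1] at herr
  rw [abs_le] at herr
  constructor
  · rw [sumsq_dot, sumsq_dot, hy1]
    linarith [herr.1]
  · rw [sumsq_dot, sumsq_dot, hy1]
    linarith [herr.2]
end

section
/- Consider the matrix A ∈ ℝ^{n×d} whose top-left r×r block is the identity and all other entries are zero. If S ∈ ℝ^{m×n} is a random 1-hashing matrix, then the probability that rank(SA) = r is at most e^{−r(r−1)/(2m)}. Consequently, for this probability to be at least 1/2, one must have m ≥ r(r−1)/(2 log 2). -/
open Matrix BigOperators Finset ENNReal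

set_option maxHeartbeats 1000000


private lemma aux_sum_range_id_real (r : ℕ) :
    (∑ i ∈ range r, (i:ℝ)) = r * ((r:ℝ) - 1) / 2 := by
  induction r with
  | zero => simp
  | succ s ih => rw [sum_range_succ, ih]; push_cast; ring

private lemma aux_descFactorial_div_le (m r : ℕ) (hm : 0 < m) :
    (m.descFactorial r : ℝ) / m ^ r ≤ Real.exp (-((r:ℝ) * ((r:ℝ) - 1)) / (2 * m)) := by
  have hm' : (0:ℝ) < m := by exact_mod_cast hm
  have h1 : (m.descFactorial r : ℝ) / m ^ r = ∏ i ∈ range r, (((m - i : ℕ) : ℝ) / m) := by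
    rw [Nat.descFactorial_eq_prod_range, Finset.prod_div_distrib, prod_const, Nat.cast_prod,
      card_range]
  rw [h1]
  have h2 : ∏ i ∈ range r, (((m - i : ℕ) : ℝ) / m) ≤ ∏ i ∈ range r, Real.exp (-(i:ℝ)/m) := by
    apply prod_le_prod
    · intro i _; positivity
    · intro i _
      rcases le_or_gt i m with h | h
      · rw [Nat.cast_sub h]
        have := Real.add_one_le_exp (-(i:ℝ)/m)
        calc ((m:ℝ) - i) / m = -(i:ℝ)/m + 1 := by field_simp; ring
          _ ≤ _ := this
      · rw [Nat.sub_eq_zero_of_le h.le]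
        simp [Real.exp_nonneg]
  refine h2.trans_eq ?_
  rw [← Real.exp_sum]
  congr 1
  rw [← sum_div, sum_neg_distrib, aux_sum_range_id_real]
  ring

private lemma aux_rank_ne_of_not_inj {n m r d : ℕ} (hrn : r ≤ n)
    (A : Matrix (Fin n) (Fin d) ℝ)
    (hA : ∀ i j, A i j = if (i : ℕ) = (j : ℕ) ∧ (i : ℕ) < r then 1 else 0)
    (f : Fin n → Fin m) (b : Fin n → Bool)
    (hf : ¬ Function.Injective fun t : Fin r => f (Fin.castLE hrn t)) :
    (Matrix.of (fun i j => if i = f j then (if b j then (1 : ℝ) else -1) else 0) * A).rank ≠ r := by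
  set S : Matrix (Fin m) (Fin n) ℝ :=
    Matrix.of (fun i j => if i = f j then (if b j then (1 : ℝ) else -1) else 0) with hS
  set g : Fin r → Fin m := fun t => f (Fin.castLE hrn t) with hg
  -- columns of S * A
  have hcol : ∀ j : Fin d, (S * A)ᵀ j ∈
      Submodule.span ℝ (Set.range fun t : Fin r => (Pi.single (g t) (1:ℝ) : Fin m → ℝ)) := by
    intro j
    by_cases h : (j : ℕ) < r
    · set k₀ : Fin n := ⟨j, lt_of_lt_of_le h hrn⟩ with hk₀
      have hAk : ∀ k : Fin n, A k j = if k = k₀ then 1 else 0 := by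
        intro k
        rw [hA]
        by_cases hk : k = k₀
        · subst hk; simp [hk₀, h]
        · have : ¬((k : ℕ) = (j : ℕ) ∧ (k : ℕ) < r) := by
            rintro ⟨h1, -⟩
            exact hk (Fin.ext h1)
          simp [this, hk]
      have hcoleq : (S * A)ᵀ j =
          (if b k₀ then (1:ℝ) else -1) • (Pi.single (f k₀) (1:ℝ) : Fin m → ℝ) := by
        funext i
        simp only [transpose_apply, mul_apply, hAk, mul_ite, mul_one, mul_zero,
          Finset.sum_ite_eq', Finset.mem_univ, if_true]
        rw [Pi.smul_apply, Pi.single_apply, hS]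
        by_cases hi : i = f k₀ <;> simp [hi]
      rw [hcoleq]
      refine Submodule.smul_mem _ _ (Submodule.subset_span ?_)
      exact ⟨⟨j, h⟩, rfl⟩
    · have hcol0 : (S * A)ᵀ j = 0 := by
        funext i
        simp only [transpose_apply, mul_apply, Pi.zero_apply]
        apply Finset.sum_eq_zero
        intro k _
        have : ¬((k : ℕ) = (j : ℕ) ∧ (k : ℕ) < r) := by
          rintro ⟨h1, h2⟩; exact h (h1 ▸ h2)
        rw [hA, if_neg this, mul_zero]
      rw [hcol0]
      exact Submodule.zero_mem _
  -- rank bound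
  obtain ⟨a, c, hac, hne⟩ : ∃ a c : Fin r, g a = g c ∧ a ≠ c := by
    simp only [Function.Injective, not_forall] at hf
    obtain ⟨a, c, h1, h2⟩ := hf
    exact ⟨a, c, h1, h2⟩
  have hrpos : 0 < r := a.pos
  have hspan : (S * A).rank ≤ r - 1 := by
    rw [Matrix.rank, Matrix.range_mulVecLin]
    have hle : Submodule.span ℝ (Set.range (S * A)ᵀ) ≤
        Submodule.span ℝ (Set.range (fun t : Fin r => (Pi.single (g t) (1:ℝ) : Fin m → ℝ))) := by
      rw [Submodule.span_le]
      rintro x ⟨j, rfl⟩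
      exact hcol j
    refine le_trans (Submodule.finrank_mono hle) ?_
    have himg : Set.range (fun t : Fin r => (Pi.single (g t) (1:ℝ) : Fin m → ℝ)) =
        ↑(((univ.erase a).image g).image (fun i : Fin m => (Pi.single i (1:ℝ) : Fin m → ℝ))) := by
      rw [Finset.coe_image, Finset.coe_image, Finset.coe_erase, Finset.coe_univ]
      ext x
      constructor
      · rintro ⟨t, rfl⟩
        by_cases ht : t = a
        · subst ht; exact ⟨g c, ⟨c, by simpa [Set.mem_diff] using (Ne.symm hne), rfl⟩, by simp [hac]⟩
        · exact ⟨g t, ⟨t, by simpa [Set.mem_diff] using ht, rfl⟩, rfl⟩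
      · rintro ⟨i, ⟨t, -, rfl⟩, rfl⟩
        exact ⟨t, rfl⟩
    rw [himg]
    refine le_trans (finrank_span_finset_le_card _) ?_
    refine le_trans Finset.card_image_le ?_
    refine le_trans Finset.card_image_le ?_
    rw [Finset.card_erase_of_mem (mem_univ a), Finset.card_univ, Fintype.card_fin]
  omega

private lemma aux_count_inj {n m r : ℕ} [NeZero m] (hrn : r ≤ n) :
    (PMF.uniformOfFintype ((Fin n → Fin m) × (Fin n → Bool))).toOuterMeasure
      {ω : (Fin n → Fin m) × (Fin n → Bool) |
        Function.Injective fun t : Fin r => ω.1 (Fin.castLE hrn t)} =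
    ((m.descFactorial r * m ^ (n - r) * 2 ^ n : ℕ) : ℝ≥0∞) / ((m ^ n * 2 ^ n : ℕ) : ℝ≥0∞) := by
  classical
  rw [PMF.toOuterMeasure_uniformOfFintype_apply]
  congr 1
  · -- card of the set
    have esub : {j : Fin n // r ≤ (j : ℕ)} ≃ Fin (n - r) :=
      { toFun := fun j => ⟨(j.1 : ℕ) - r, by have := j.1.2; have := j.2; omega⟩
        invFun := fun k => ⟨⟨(k : ℕ) + r, by have := k.2; omega⟩, Nat.le_add_left r k⟩
        left_inv := fun j => by
          apply Subtype.ext; apply Fin.ext; have := j.2; simp; omega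
        right_inv := fun k => by apply Fin.ext; simp }
    have e : {ω : (Fin n → Fin m) × (Fin n → Bool) |
        Function.Injective fun t : Fin r => ω.1 (Fin.castLE hrn t)} ≃
        (Fin r ↪ Fin m) × (({j : Fin n // r ≤ (j : ℕ)} → Fin m) × (Fin n → Bool)) :=
      { toFun := fun x => (⟨fun t => x.1.1 (Fin.castLE hrn t), x.2⟩,
          fun j => x.1.1 j.1, x.1.2)
        invFun := fun x => ⟨((fun j => if h : (j : ℕ) < r then x.1 ⟨j, h⟩
            else x.2.1 ⟨j, le_of_not_gt h⟩), x.2.2), by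
          intro t₁ t₂ h
          simp only at h
          have ht₁ : ((Fin.castLE hrn t₁ : Fin n) : ℕ) < r := t₁.2
          have ht₂ : ((Fin.castLE hrn t₂ : Fin n) : ℕ) < r := t₂.2
          rw [dif_pos ht₁, dif_pos ht₂] at h
          exact x.1.injective h⟩
        left_inv := fun x => by
          apply Subtype.ext
          refine Prod.ext ?_ rfl
          funext j
          by_cases h : (j : ℕ) < r
          · simp only [dif_pos h]
            congr 1
          · simp only [dif_neg h]
        right_inv := fun x => by
          refine Prod.ext ?_ (Prod.ext ?_ rfl)
          · ext t
            have ht : ((Fin.castLE hrn t : Fin n) : ℕ) < r := t.2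
            simp only [Function.Embedding.coeFn_mk, dif_pos ht]
            rfl
          · funext j
            simp only [dif_neg (not_lt.mpr j.2)] }
    have hcard : Fintype.card {ω : (Fin n → Fin m) × (Fin n → Bool) |
        Function.Injective fun t : Fin r => ω.1 (Fin.castLE hrn t)} =
        m.descFactorial r * m ^ (n - r) * 2 ^ n := by
      rw [Fintype.card_congr e]
      simp [Fintype.card_congr esub, Fintype.card_embedding_eq, Nat.mul_assoc]
    norm_cast
  · simp


theorem stmt_11 {n m r d : ℕ} [NeZero m] (hrn : r ≤ n) (hrd : r ≤ d)
    (A : Matrix (Fin n) (Fin d) ℝ)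
    (hA : ∀ i j, A i j = if (i : ℕ) = (j : ℕ) ∧ (i : ℕ) < r then 1 else 0) :
    (PMF.uniformOfFintype ((Fin n → Fin m) × (Fin n → Bool))).toOuterMeasure
        {ω | (Matrix.of (fun i j =>
          if i = ω.1 j then (if ω.2 j then (1 : ℝ) else -1) else 0) * A).rank = r}
      ≤ ENNReal.ofReal (Real.exp (-((r : ℝ) * ((r : ℝ) - 1)) / (2 * m))) ∧
    (ENNReal.ofReal (1 / 2) ≤
        (PMF.uniformOfFintype ((Fin n → Fin m) × (Fin n → Bool))).toOuterMeasure
          {ω | (Matrix.of (fun i j =>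
            if i = ω.1 j then (if ω.2 j then (1 : ℝ) else -1) else 0) * A).rank = r} →
      (r : ℝ) * ((r : ℝ) - 1) / (2 * Real.log 2) ≤ m) := by
  have hm : 0 < m := Nat.pos_of_ne_zero (NeZero.ne m)
  have hm' : (0:ℝ) < m := by exact_mod_cast hm
  have hsub : {ω : (Fin n → Fin m) × (Fin n → Bool) | (Matrix.of (fun i j =>
      if i = ω.1 j then (if ω.2 j then (1 : ℝ) else -1) else 0) * A).rank = r} ⊆
      {ω : (Fin n → Fin m) × (Fin n → Bool) |
        Function.Injective fun t : Fin r => ω.1 (Fin.castLE hrn t)} := by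
    intro ω hω
    by_contra hni
    exact aux_rank_ne_of_not_inj hrn A hA ω.1 ω.2 hni hω
  have hmain : (PMF.uniformOfFintype ((Fin n → Fin m) × (Fin n → Bool))).toOuterMeasure
      {ω | (Matrix.of (fun i j =>
        if i = ω.1 j then (if ω.2 j then (1 : ℝ) else -1) else 0) * A).rank = r}
      ≤ ENNReal.ofReal (Real.exp (-((r : ℝ) * ((r : ℝ) - 1)) / (2 * m))) := by
    have hIle : (PMF.uniformOfFintype ((Fin n → Fin m) × (Fin n → Bool))).toOuterMeasure
        {ω : (Fin n → Fin m) × (Fin n → Bool) |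
          Function.Injective fun t : Fin r => ω.1 (Fin.castLE hrn t)}
        ≤ ENNReal.ofReal (Real.exp (-((r : ℝ) * ((r : ℝ) - 1)) / (2 * m))) := ?_
    · exact le_trans ((PMF.uniformOfFintype
        ((Fin n → Fin m) × (Fin n → Bool))).toOuterMeasure.mono hsub) hIle
    rw [aux_count_inj hrn]
    have hden : (0:ℝ) < ((m ^ n * 2 ^ n : ℕ) : ℝ) := by positivity
    rw [← ENNReal.ofReal_natCast (m.descFactorial r * m ^ (n - r) * 2 ^ n),
      ← ENNReal.ofReal_natCast (m ^ n * 2 ^ n),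
      ← ENNReal.ofReal_div_of_pos hden]
    apply ENNReal.ofReal_le_ofReal
    have hsplit : (m:ℝ) ^ n = (m:ℝ) ^ r * (m:ℝ) ^ (n - r) := by
      rw [← pow_add]; congr 1; omega
    have heq : ((m.descFactorial r * m ^ (n - r) * 2 ^ n : ℕ) : ℝ) /
        ((m ^ n * 2 ^ n : ℕ) : ℝ) = (m.descFactorial r : ℝ) / (m:ℝ) ^ r := by
      push_cast
      rw [hsplit]
      have h1 : (m:ℝ) ^ (n - r) ≠ 0 := by positivity
      have h2 : (2:ℝ) ^ n ≠ 0 := by positivity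
      have h3 : (m:ℝ) ^ r ≠ 0 := by positivity
      field_simp
    rw [heq]
    exact aux_descFactorial_div_le m r hm
  refine ⟨hmain, fun h => ?_⟩
  have hhalf : (1:ℝ)/2 ≤ Real.exp (-((r : ℝ) * ((r : ℝ) - 1)) / (2 * m)) := by
    rw [← ENNReal.ofReal_le_ofReal_iff (Real.exp_nonneg _)]
    exact le_trans h hmain
  have hlog : Real.log ((1:ℝ)/2) ≤ -((r : ℝ) * ((r : ℝ) - 1)) / (2 * m) := by
    have := Real.log_le_log (by norm_num) hhalf
    rwa [Real.log_exp] at this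
  have hlog2 : Real.log ((1:ℝ)/2) = - Real.log 2 := by
    rw [one_div, Real.log_inv]
  rw [hlog2] at hlog
  have hl2 : 0 < Real.log 2 := Real.log_pos one_lt_two
  have h3 : (r:ℝ) * ((r:ℝ) - 1) / (2 * m) ≤ Real.log 2 := by
    have hnd : -((r:ℝ) * ((r:ℝ) - 1)) / (2 * m) = -((r:ℝ) * ((r:ℝ) - 1) / (2 * m)) :=
      neg_div _ _
    rw [hnd] at hlog
    linarith
  rw [div_le_iff₀ (by positivity)]
  have h4 := (div_le_iff₀ (by positivity : (0:ℝ) < 2 * m)).mp h3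
  calc (r:ℝ) * ((r:ℝ) - 1) ≤ Real.log 2 * (2 * m) := h4
    _ = (m:ℝ) * (2 * Real.log 2) := by ring
end

section
/- An s-hashing variant matrix T ∈ ℝ^{m×n} is equal in distribution to (1/√s)(S⁽¹⁾ + S⁽²⁾ + ⋯ + S⁽ˢ⁾), where S⁽¹⁾,…,S⁽ˢ⁾ are independent 1-hashing matrices in ℝ^{m×n}. -/
open Matrix BigOperators

lemma map_equiv_uniform {α β : Type*} [Fintype α] [Fintype β] [Nonempty α] [Nonempty β]
    (e : α ≃ β) : PMF.map e (PMF.uniformOfFintype α) = PMF.uniformOfFintype β := by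
  ext b
  rw [PMF.map_apply, tsum_eq_single (e.symm b) (by
    intro a ha
    simp only [ite_eq_right_iff]
    intro h
    exact absurd (by rw [h, Equiv.symm_apply_apply]) ha)]
  simp [PMF.uniformOfFintype_apply, Fintype.card_congr e]

theorem stmt_13 {m n s : ℕ} [NeZero m] :
    PMF.map (fun ω : Fin n → Fin s → Fin m × Bool =>
        Matrix.of (fun i j => (Real.sqrt s)⁻¹ *
          ∑ k : Fin s, (if i = (ω j k).1 then (if (ω j k).2 then (1 : ℝ) else -1) else 0)))
      (PMF.uniformOfFintype (Fin n → Fin s → Fin m × Bool)) =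
    PMF.map (fun ω : Fin s → Fin n → Fin m × Bool =>
        (Real.sqrt s)⁻¹ • ∑ k : Fin s, Matrix.of (fun i j =>
          if i = (ω k j).1 then (if (ω k j).2 then (1 : ℝ) else -1) else 0))
      (PMF.uniformOfFintype (Fin s → Fin n → Fin m × Bool)) := by
  rw [← map_equiv_uniform
    (⟨Function.swap, Function.swap, fun _ => rfl, fun _ => rfl⟩ :
      (Fin s → Fin n → Fin m × Bool) ≃ (Fin n → Fin s → Fin m × Bool)), PMF.map_comp]
  congr 1
  funext ω
  ext i j
  simp [Function.swap, Matrix.sum_apply, Finset.mul_sum, mul_ite, mul_one, mul_neg]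
end

section
/- Suppose S ∈ ℝ^{m×n} is an ε-subspace embedding for the augmented matrix (A b) with 0 < ε < 1, and let x_s be any minimizer of ‖SAx − Sb‖₂ over x ∈ ℝ^d. Then ‖Ax_s − b‖₂ ≤ ((1+ε)/(1−ε)) ‖Ax* − b‖₂, where x* is any minimizer of ‖Ax − b‖₂. -/
open Matrix BigOperators

theorem stmt_17 {m n d : ℕ} (S : Matrix (Fin m) (Fin n) ℝ)
    (A : Matrix (Fin n) (Fin d) ℝ) (b : Fin n → ℝ) (ε : ℝ)
    (hε0 : 0 < ε) (hε1 : ε < 1)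
    (hemb : ∀ (x : Fin d → ℝ) (β : ℝ),
      (1 - ε) * ∑ i, (A.mulVec x i - β * b i) ^ 2 ≤
        ∑ i, (S.mulVec (A.mulVec x - β • b) i) ^ 2 ∧
      ∑ i, (S.mulVec (A.mulVec x - β • b) i) ^ 2 ≤
        (1 + ε) * ∑ i, (A.mulVec x i - β * b i) ^ 2)
    (xs : Fin d → ℝ)
    (hxs : ∀ x : Fin d → ℝ,
      ∑ i, (S.mulVec (A.mulVec xs - b) i) ^ 2 ≤ ∑ i, (S.mulVec (A.mulVec x - b) i) ^ 2)
    (xstar : Fin d → ℝ)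
    (hxstar : ∀ x : Fin d → ℝ,
      ∑ i, (A.mulVec xstar i - b i) ^ 2 ≤ ∑ i, (A.mulVec x i - b i) ^ 2) :
    Real.sqrt (∑ i, (A.mulVec xs i - b i) ^ 2) ≤
      ((1 + ε) / (1 - ε)) * Real.sqrt (∑ i, (A.mulVec xstar i - b i) ^ 2) := by
  have h1 := (hemb xs 1).1
  have h2 := (hemb xstar 1).2
  simp only [one_smul, one_mul] at h1 h2
  set P := ∑ i, (A.mulVec xs i - b i) ^ 2 with hP
  set Q := ∑ i, (A.mulVec xstar i - b i) ^ 2 with hQ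
  have hQ0 : 0 ≤ Q := Finset.sum_nonneg fun i _ => sq_nonneg _
  have hP0 : 0 ≤ P := Finset.sum_nonneg fun i _ => sq_nonneg _
  have h1ε : 0 < 1 - ε := by linarith
  have hchain : (1 - ε) * P ≤ (1 + ε) * Q :=
    le_trans h1 (le_trans (hxs xstar) h2)
  have hc : (1 : ℝ) ≤ (1 + ε) / (1 - ε) := by
    rw [le_div_iff₀ h1ε]; linarith
  have hPQ : P ≤ ((1 + ε) / (1 - ε)) * Q := by
    rw [div_mul_eq_mul_div, le_div_iff₀ h1ε]; nlinarith
  calc Real.sqrt P ≤ Real.sqrt (((1 + ε) / (1 - ε)) * Q) := Real.sqrt_le_sqrt hPQ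
    _ = Real.sqrt ((1 + ε) / (1 - ε)) * Real.sqrt Q := Real.sqrt_mul (by positivity) Q
    _ ≤ ((1 + ε) / (1 - ε)) * Real.sqrt Q := by
        gcongr
        have h := Real.sq_sqrt (le_trans zero_le_one hc)
        nlinarith [Real.sqrt_nonneg ((1 + ε) / (1 - ε))]
end
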